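/- Backward direction of the NP-hardness reduction: let s_1,…,s_m be positive integers with β = Σ_{i=1}^m s_i, and construct the SIPP instance with n = (m+1)² squares, side lengths l_1 = (m+1)β and, for each i ∈ {1,…,m}, l_j = (m−i+1)β + s_i for j = i²+1,…,i(i+1) and l_j = (m−i+1)β for j = i(i+1)+1,…,(i+1)², and width bound b = λ = (m+1)(m+2)β/2 + β/2. If there exists a layout A (with pq ≥ n, dummy side lengths 0 for indices beyond n) satisfying W(A) ≤ b and H(A) ≤ λ, then there exists a subset S ⊆ {1,…,m} with Σ_{i∈S} s_i = β/2. -/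

import Mathlib

/-- A `p × q` layout: a matrix whose entries are exactly the integers `1, …, p*q`. -/
def IsLayout (p q : ℕ) (A : Fin p → Fin q → ℕ) : Prop :=
  Function.Injective (fun ij : Fin p × Fin q => A ij.1 ij.2) ∧
  (Set.range fun ij : Fin p × Fin q => A ij.1 ij.2) = Set.Icc 1 (p * q)

/-- Width of a layout with respect to side lengths `l`. -/
def layW (l : ℕ → ℕ) {p q : ℕ} (A : Fin p → Fin q → ℕ) : ℕ :=
  ∑ j : Fin q, Finset.univ.sup fun i : Fin p => l (A i j)

/-- Height of a layout with respect to side lengths `l`. -/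
def layH (l : ℕ → ℕ) {p q : ℕ} (A : Fin p → Fin q → ℕ) : ℕ :=
  ∑ i : Fin p, Finset.univ.sup fun j : Fin q => l (A i j)

/- ### Auxiliary arithmetic lemmas -/

lemma aux_key0 (a b i : ℕ) (h : i * i ≤ a * b) : 2 * i ≤ a + b := by
  nlinarith [sq_nonneg ((a : ℤ) - b), sq_nonneg ((a : ℤ) + b)]

lemma aux_key2 (a b i : ℕ) (hi : 1 ≤ i) (h : i * i + i ≤ a * b) : 2 * i + 1 ≤ a + b := by
  by_contra hc
  push_neg at hc
  nlinarith [sq_nonneg ((a : ℤ) - b)]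

lemma aux_key1 (a b i : ℕ) (h : i * i ≤ a * b) (h2 : a + b = 2 * i) : a = i ∧ b = i := by
  constructor <;> nlinarith [sq_nonneg ((a : ℤ) - b)]

lemma aux_key3 (a b i : ℕ) (h : i * i + i ≤ a * b) (h2 : a + b = 2 * i + 1) :
    a = i ∨ a = i + 1 := by
  by_contra hc
  push_neg at hc
  obtain ⟨h3, h4⟩ := hc
  rcases Nat.lt_or_ge a i with h5 | h5
  · nlinarith
  · have : i + 1 < a := by omega
    nlinarith

lemma aux_sum_eq_of_le {ι : Type*} (s : Finset ι) (f g : ι → ℕ) (h : ∀ i ∈ s, g i ≤ f i)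
    (h2 : ∑ i ∈ s, f i ≤ ∑ i ∈ s, g i) : ∀ i ∈ s, f i = g i := by
  intro i hi
  by_contra hne
  have hlt : g i < f i := lt_of_le_of_ne (h i hi) (Ne.symm hne)
  have := Finset.sum_lt_sum h ⟨i, hi, hlt⟩
  omega

lemma aux_sum_ind {x M : ℕ} (h : x ≤ M) :
    ∑ t ∈ Finset.Ioc 0 M, (if t ≤ x then 1 else 0) = x := by
  have : ∀ t ∈ Finset.Ioc 0 M, (if t ≤ x then 1 else 0) = (if t ∈ Finset.Ioc 0 x then 1 else 0) := by
    intro t ht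
    simp only [Finset.mem_Ioc] at ht ⊢
    by_cases h1 : t ≤ x <;> simp [h1, ht.1]
  rw [Finset.sum_congr rfl this, Finset.sum_ite_mem, Finset.inter_comm,
    Finset.inter_eq_left.mpr ?_]
  · simp
  · intro t ht
    simp only [Finset.mem_Ioc] at ht ⊢
    omega

lemma aux_telescope (f : ℕ → ℕ) (b : ℕ → ℕ) (hb : ∀ i, b (i + 1) ≤ b i) :
    ∀ n, ∑ t ∈ Finset.Ioc 0 (b 0), f t =
      ∑ t ∈ Finset.Ioc 0 (b n), f t + ∑ i ∈ Finset.range n, ∑ t ∈ Finset.Ioc (b (i + 1)) (b i), f t := by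
  intro n
  induction n with
  | zero => simp
  | succ n ih =>
    rw [ih, Finset.sum_range_succ]
    have : ∑ t ∈ Finset.Ioc 0 (b n), f t =
        ∑ t ∈ Finset.Ioc 0 (b (n + 1)), f t + ∑ t ∈ Finset.Ioc (b (n + 1)) (b n), f t :=
      (Finset.sum_Ioc_consecutive f (Nat.zero_le _) (hb n)).symm
    omega

/- ### Classification of the side lengths -/

def LClass (m : ℕ) (s : ℕ → ℕ) (β : ℕ) (l : ℕ → ℕ) : Prop :=
  ∀ k, 1 ≤ k →
      (k = 1 ∧ l k = (m + 1) * β) ∨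
      (∃ i, 1 ≤ i ∧ i ≤ m ∧ i ^ 2 + 1 ≤ k ∧ k ≤ (i + 1) ^ 2 ∧
        ((k ≤ i * (i + 1) ∧ l k = (m + 1 - i) * β + s i) ∨
         (i * (i + 1) + 1 ≤ k ∧ l k = (m + 1 - i) * β))) ∨
      ((m + 1) ^ 2 < k ∧ l k = 0)

lemma aux_l_class (m : ℕ) (s : ℕ → ℕ) (β : ℕ) (l : ℕ → ℕ) (hl1 : l 1 = (m + 1) * β)
    (hla : ∀ i, 1 ≤ i → i ≤ m → ∀ j, i ^ 2 + 1 ≤ j → j ≤ i * (i + 1) →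
      l j = (m - i + 1) * β + s i)
    (hlb : ∀ i, 1 ≤ i → i ≤ m → ∀ j, i * (i + 1) + 1 ≤ j → j ≤ (i + 1) ^ 2 →
      l j = (m - i + 1) * β)
    (hl0 : ∀ k, (m + 1) ^ 2 < k → l k = 0) : LClass m s β l := by
  intro k hk
  set i := Nat.sqrt (k - 1) with hi
  have h1 : i * i ≤ k - 1 := by simpa [pow_two] using Nat.sqrt_le' (k - 1)
  have h2 : k - 1 < (i + 1) * (i + 1) := by
    simpa [pow_two, Nat.succ_eq_add_one] using Nat.lt_succ_sqrt' (k - 1)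
  obtain hiz | hip := Nat.eq_zero_or_pos i
  · left
    have hk1 : k = 1 := by
      rw [hiz] at h2
      omega
    exact ⟨hk1, by rw [hk1, hl1]⟩
  have hk1 : k - 1 + 1 = k := Nat.sub_add_cancel hk
  rcases le_or_gt i m with him | him
  · right; left
    refine ⟨i, hip, him, by rw [pow_two]; linarith, by rw [pow_two]; linarith, ?_⟩
    have hmi : m - i + 1 = m + 1 - i := by omega
    rcases le_or_gt k (i * (i + 1)) with hle | hlt
    · left
      refine ⟨hle, ?_⟩
      rw [hla i hip him k (by rw [pow_two]; linarith) hle, hmi]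
    · right
      refine ⟨hlt, ?_⟩
      rw [hlb i hip him k hlt (by rw [pow_two]; linarith), hmi]
  · right; right
    have hmm : (m + 1) * (m + 1) ≤ i * i := Nat.mul_le_mul him him
    have : (m + 1) ^ 2 < k := by rw [pow_two]; linarith
    exact ⟨this, hl0 k this⟩

section
variable {m : ℕ} {s : ℕ → ℕ} {β : ℕ} {l : ℕ → ℕ}
  (hcl : LClass m s β l) (hsb : ∀ i, 1 ≤ i → i ≤ m → s i ≤ β)

include hcl hsb

lemma aux_l_le_max : ∀ k, 1 ≤ k → l k ≤ (m + 1) * β := by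
  intro k hk
  rcases hcl k hk with ⟨_, h⟩ | ⟨j, hj1, hjm, _, _, ⟨_, h⟩ | ⟨_, h⟩⟩ | ⟨_, h⟩
  · omega
  · rw [h]
    have h1 : s j ≤ β := hsb j hj1 hjm
    have h2 : (m + 1 - j) * β + j * β = (m + 1) * β := by
      rw [← add_mul]; congr 1; omega
    have h3 : β ≤ j * β := Nat.le_mul_of_pos_left β (by omega)
    omega
  · rw [h]
    exact Nat.mul_le_mul_right β (by omega)
  · omega

lemma aux_lb' : ∀ i, 1 ≤ i → i ≤ m → ∀ k, 1 ≤ k → k ≤ i * i + i →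
    (m + 1 - i) * β + s i ≤ l k := by
  intro i hi1 him k hk hki
  have hsi : s i ≤ β := hsb i hi1 him
  rcases hcl k hk with ⟨_, h⟩ | ⟨j, hj1, hjm, hk1, hk2, ⟨hk3, h⟩ | ⟨hk3, h⟩⟩ | ⟨hbig, h⟩
  · rw [h]
    have h2 : (m + 1 - i) * β + i * β = (m + 1) * β := by rw [← add_mul]; congr 1; omega
    have h3 : β ≤ i * β := Nat.le_mul_of_pos_left β (by omega)
    omega
  · have hji : j ≤ i := by nlinarith [pow_two j]
    rw [h]
    rcases Nat.eq_or_lt_of_le hji with rfl | hji'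
    · omega
    · have hsj : s j ≤ β := hsb j hj1 hjm
      have h2 : (m + 1 - j) * β = (m + 1 - i) * β + (i - j) * β := by
        rw [← add_mul]; congr 1; omega
      have h3 : β ≤ (i - j) * β := Nat.le_mul_of_pos_left β (by omega)
      omega
  · have hji : j < i := by nlinarith
    rw [h]
    have h2 : (m + 1 - j) * β = (m + 1 - i) * β + (i - j) * β := by
      rw [← add_mul]; congr 1; omega
    have h3 : β ≤ (i - j) * β := Nat.le_mul_of_pos_left β (by omega)
    omega
  · exfalso
    have : i * i + i < (m + 1) ^ 2 + 1 := by nlinarith [pow_two (m + 1)]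
    omega

omit hsb in
include hcl in
lemma aux_lb : ∀ i, i ≤ m → ∀ k, 1 ≤ k → k ≤ (i + 1) ^ 2 → (m + 1 - i) * β ≤ l k := by
  intro i him k hk hki
  rcases hcl k hk with ⟨_, h⟩ | ⟨j, hj1, hjm, hk1, hk2, ⟨hk3, h⟩ | ⟨hk3, h⟩⟩ | ⟨hbig, h⟩
  · rw [h]; exact Nat.mul_le_mul_right β (by omega)
  · have hji : j ≤ i := by nlinarith [pow_two j, pow_two (i + 1)]
    rw [h]
    have h2 : (m + 1 - i) * β ≤ (m + 1 - j) * β := Nat.mul_le_mul_right β (by omega)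
    omega
  · have hji : j ≤ i := by nlinarith [pow_two j, pow_two (i + 1)]
    rw [h]
    exact Nat.mul_le_mul_right β (by omega)
  · exfalso
    have : (i + 1) ^ 2 ≤ (m + 1) ^ 2 := Nat.pow_le_pow_left (by omega) 2
    omega

lemma aux_ub1 : ∀ i, 1 ≤ i → i ≤ m → ∀ k, i * i < k → l k ≤ (m + 1 - i) * β + s i := by
  intro i hi1 him k hki
  have hk : 1 ≤ k := by omega
  rcases hcl k hk with ⟨hk1, h⟩ | ⟨j, hj1, hjm, hk1, hk2, ⟨hk3, h⟩ | ⟨hk3, h⟩⟩ | ⟨hbig, h⟩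
  · exfalso; nlinarith
  · have hji : i ≤ j := by nlinarith [pow_two (i + 1), pow_two j]
    rw [h]
    rcases Nat.eq_or_lt_of_le hji with rfl | hji'
    · omega
    · have hsj : s j ≤ β := hsb j hj1 hjm
      have h2 : (m + 1 - i) * β = (m + 1 - j) * β + (j - i) * β := by
        rw [← add_mul]; congr 1; omega
      have h3 : β ≤ (j - i) * β := Nat.le_mul_of_pos_left β (by omega)
      omega
  · have hji : i ≤ j := by nlinarith [pow_two (i + 1), pow_two j]
    rw [h]
    have h2 : (m + 1 - j) * β ≤ (m + 1 - i) * β := Nat.mul_le_mul_right β (by omega)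
    omega
  · omega

lemma aux_ub2 : ∀ i, 1 ≤ i → i ≤ m → ∀ k, i * i + i < k → l k ≤ (m + 1 - i) * β := by
  intro i hi1 him k hki
  have hk : 1 ≤ k := by omega
  rcases hcl k hk with ⟨hk1, h⟩ | ⟨j, hj1, hjm, hk1, hk2, ⟨hk3, h⟩ | ⟨hk3, h⟩⟩ | ⟨hbig, h⟩
  · exfalso; nlinarith
  · have hji : i < j := by nlinarith
    rw [h]
    have hsj : s j ≤ β := hsb j hj1 hjm
    have h2 : (m + 1 - i) * β = (m + 1 - j) * β + (j - i) * β := by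
      rw [← add_mul]; congr 1; omega
    have h3 : β ≤ (j - i) * β := Nat.le_mul_of_pos_left β (by omega)
    omega
  · have hji : i ≤ j := by nlinarith [pow_two (i + 1), pow_two j]
    rw [h]
    exact Nat.mul_le_mul_right β (by omega)
  · omega

/-- Value-gap lemma: no side length lies strictly between `(m+1-v)β` and `(m+1-v)β + s v`. -/
lemma aux_gap : ∀ v, 1 ≤ v → v ≤ m → ∀ k, 1 ≤ k → (m + 1 - v) * β < l k →
    (m + 1 - v) * β + s v ≤ l k := by
  intro v hv1 hvm k hk hlt
  have hsv : s v ≤ β := hsb v hv1 hvm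
  rcases hcl k hk with ⟨_, h⟩ | ⟨j, hj1, hjm, hk1, hk2, ⟨hk3, h⟩ | ⟨hk3, h⟩⟩ | ⟨hbig, h⟩
  · rw [h]
    have h2 : (m + 1 - v) * β + v * β = (m + 1) * β := by rw [← add_mul]; congr 1; omega
    have h3 : β ≤ v * β := Nat.le_mul_of_pos_left β (by omega)
    omega
  · rw [h]; rw [h] at hlt
    have hsj : s j ≤ β := hsb j hj1 hjm
    rcases le_or_gt j v with hjv | hjv
    · rcases Nat.eq_or_lt_of_le hjv with rfl | hjv'
      · omega
      · have h2 : (m + 1 - j) * β = (m + 1 - v) * β + (v - j) * β := by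
          rw [← add_mul]; congr 1; omega
        have h3 : β ≤ (v - j) * β := Nat.le_mul_of_pos_left β (by omega)
        omega
    · exfalso
      have h2 : (m + 1 - j) * β + β = (m + 2 - j) * β := by
        rw [← Nat.succ_mul]; congr 1; omega
      have h3 : (m + 2 - j) * β ≤ (m + 1 - v) * β := Nat.mul_le_mul_right β (by omega)
      omega
  · rw [h]; rw [h] at hlt
    rcases le_or_gt v j with hjv | hjv
    · exfalso
      have h3 : (m + 1 - j) * β ≤ (m + 1 - v) * β := Nat.mul_le_mul_right β (by omega)
      omega
    · have h2 : (m + 1 - j) * β = (m + 1 - v) * β + (v - j) * β := by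
        rw [← add_mul]; congr 1; omega
      have h3 : β ≤ (v - j) * β := Nat.le_mul_of_pos_left β (by omega)
      omega
  · rw [h] at hlt; omega

/- ### Counts of squares above a threshold -/

lemma aux_Na (hm : 1 ≤ m) : ∀ t, 1 ≤ t → t ≤ β →
    (Finset.Icc 1 ((m + 1) ^ 2)).filter (fun k => t ≤ l k) = Finset.Icc 1 ((m + 1) ^ 2) := by
  intro t ht1 ht2
  apply Finset.filter_true_of_mem
  intro k hk
  simp only [Finset.mem_Icc] at hk
  have h1 := aux_lb hcl m (le_refl m) k hk.1 hk.2
  have h2 : m + 1 - m = 1 := by omega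
  rw [h2, one_mul] at h1
  omega

lemma aux_Nb : ∀ v, 1 ≤ v → v ≤ m → ∀ t, (m + 1 - v) * β < t → t ≤ (m + 1 - v) * β + s v →
    (Finset.Icc 1 ((m + 1) ^ 2)).filter (fun k => t ≤ l k) = Finset.Icc 1 (v * v + v) := by
  intro v hv1 hvm t ht1 ht2
  ext k
  simp only [Finset.mem_filter, Finset.mem_Icc]
  constructor
  · rintro ⟨⟨hk1, hk2⟩, hk3⟩
    refine ⟨hk1, ?_⟩
    by_contra hc
    push_neg at hc
    have := aux_ub2 hcl hsb v hv1 hvm k hc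
    omega
  · rintro ⟨hk1, hk2⟩
    have hkn : k ≤ (m + 1) ^ 2 := by
      have : v * v + v ≤ (m + 1) ^ 2 := by nlinarith [pow_two (m + 1)]
      omega
    have := aux_lb' hcl hsb v hv1 hvm k hk1 hk2
    exact ⟨⟨hk1, hkn⟩, by omega⟩

lemma aux_Nc : ∀ v, 1 ≤ v → v ≤ m → ∀ t, (m + 1 - v) * β + s v < t → t ≤ (m + 2 - v) * β →
    (Finset.Icc 1 ((m + 1) ^ 2)).filter (fun k => t ≤ l k) = Finset.Icc 1 (v * v) := by
  intro v hv1 hvm t ht1 ht2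
  ext k
  simp only [Finset.mem_filter, Finset.mem_Icc]
  constructor
  · rintro ⟨⟨hk1, hk2⟩, hk3⟩
    refine ⟨hk1, ?_⟩
    by_contra hc
    push_neg at hc
    have := aux_ub1 hcl hsb v hv1 hvm k hc
    omega
  · rintro ⟨hk1, hk2⟩
    have hkn : k ≤ (m + 1) ^ 2 := by
      have : v * v ≤ (m + 1) ^ 2 := by nlinarith [pow_two (m + 1)]
      omega
    have h3 : k ≤ (v - 1 + 1) ^ 2 := by
      have : v - 1 + 1 = v := by omega
      rw [this, pow_two]
      omega
    have h4 := aux_lb hcl (v - 1) (by omega) k hk1 h3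
    have h5 : m + 1 - (v - 1) = m + 2 - v := by omega
    rw [h5] at h4
    exact ⟨⟨hk1, hkn⟩, by omega⟩

end

/- ### Layout counting lemmas -/

lemma aux_layW (l : ℕ → ℕ) {p q : ℕ} (A : Fin p → Fin q → ℕ) (M : ℕ)
    (hbd : ∀ i j, l (A i j) ≤ M) :
    layW l A = ∑ t ∈ Finset.Ioc 0 M,
      (Finset.univ.filter (fun j : Fin q => t ≤ Finset.univ.sup fun i : Fin p => l (A i j))).card := by
  unfold layW
  have h1 : ∀ j : Fin q, (Finset.univ.sup fun i : Fin p => l (A i j)) ≤ M :=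
    fun j => Finset.sup_le fun i _ => hbd i j
  calc ∑ j : Fin q, Finset.univ.sup (fun i : Fin p => l (A i j))
      = ∑ j : Fin q, ∑ t ∈ Finset.Ioc 0 M,
          (if t ≤ Finset.univ.sup fun i : Fin p => l (A i j) then 1 else 0) := by
        exact Finset.sum_congr rfl fun j _ => (aux_sum_ind (h1 j)).symm
    _ = ∑ t ∈ Finset.Ioc 0 M, ∑ j : Fin q,
          (if t ≤ Finset.univ.sup fun i : Fin p => l (A i j) then 1 else 0) :=
        Finset.sum_comm
    _ = _ := by
        refine Finset.sum_congr rfl fun t _ => ?_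
        rw [Finset.card_filter]

lemma aux_count {p q : ℕ} (hp : 0 < p) (hq : 0 < q) (A : Fin p → Fin q → ℕ)
    (hA : IsLayout p q A) {n : ℕ} (hn : n ≤ p * q) (l : ℕ → ℕ) (t : ℕ) :
    ((Finset.Icc 1 n).filter (fun k => t ≤ l k)).card ≤
    ((Finset.univ.filter (fun j : Fin q => t ≤ Finset.univ.sup fun i : Fin p => l (A i j))).card) *
    ((Finset.univ.filter (fun i : Fin p => t ≤ Finset.univ.sup fun j : Fin q => l (A i j))).card) := by
  classical
  have hex : ∀ k, 1 ≤ k → k ≤ n → ∃ ij : Fin p × Fin q, A ij.1 ij.2 = k := by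
    intro k h1 h2
    have : k ∈ Set.Icc 1 (p * q) := ⟨h1, le_trans h2 hn⟩
    rw [← hA.2] at this
    exact this
  haveI : Inhabited (Fin p × Fin q) := ⟨⟨⟨0, hp⟩, ⟨0, hq⟩⟩⟩
  set g : ℕ → Fin p × Fin q := fun k =>
    if h : ∃ ij : Fin p × Fin q, A ij.1 ij.2 = k then h.choose else default with hg
  have hgspec : ∀ k, 1 ≤ k → k ≤ n → A (g k).1 (g k).2 = k := by
    intro k h1 h2
    have h := hex k h1 h2
    simp only [hg, dif_pos h]
    exact h.choose_spec
  rw [← Finset.card_product]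
  apply Finset.card_le_card_of_injOn (fun k => ((g k).2, (g k).1))
  · intro k hk
    simp only [Finset.mem_coe, Finset.mem_filter, Finset.mem_Icc] at hk
    obtain ⟨⟨h1, h2⟩, h3⟩ := hk
    have hAk := hgspec k h1 h2
    simp only [Finset.mem_coe, Finset.mem_product, Finset.mem_filter, Finset.mem_univ, true_and]
    constructor
    · have h4 : l (A (g k).1 (g k).2) ≤ Finset.univ.sup (fun i : Fin p => l (A i (g k).2)) :=
        Finset.le_sup (f := fun i : Fin p => l (A i (g k).2)) (Finset.mem_univ (g k).1)
      rw [hAk] at h4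
      exact le_trans h3 h4
    · have h4 : l (A (g k).1 (g k).2) ≤ Finset.univ.sup (fun j : Fin q => l (A (g k).1 j)) :=
        Finset.le_sup (f := fun j : Fin q => l (A (g k).1 j)) (Finset.mem_univ (g k).2)
      rw [hAk] at h4
      exact le_trans h3 h4
  · intro k hk k' hk' heq
    simp only [Finset.coe_filter, Set.mem_setOf_eq, Finset.mem_Icc] at hk hk'
    have h1 := hgspec k hk.1.1 hk.1.2
    have h2 := hgspec k' hk'.1.1 hk'.1.2
    have h3 : (g k) = (g k') := by
      have := Prod.ext_iff.mp heq
      exact Prod.ext this.2 this.1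
    rw [← h1, ← h2, h3]

theorem sipp_to_partition (m : ℕ) (s : ℕ → ℕ)
    (hs : ∀ i, 1 ≤ i → i ≤ m → 0 < s i)
    (β : ℕ) (hβ : β = ∑ i ∈ Finset.Icc 1 m, s i)
    (l : ℕ → ℕ) (hl1 : l 1 = (m + 1) * β)
    (hla : ∀ i, 1 ≤ i → i ≤ m → ∀ j, i ^ 2 + 1 ≤ j → j ≤ i * (i + 1) →
      l j = (m - i + 1) * β + s i)
    (hlb : ∀ i, 1 ≤ i → i ≤ m → ∀ j, i * (i + 1) + 1 ≤ j → j ≤ (i + 1) ^ 2 →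
      l j = (m - i + 1) * β)
    (hl0 : ∀ k, (m + 1) ^ 2 < k → l k = 0)
    (p q : ℕ) (A : Fin p → Fin q → ℕ)
    (hpq : (m + 1) ^ 2 ≤ p * q) (hA : IsLayout p q A)
    (hW : (layW l A : ℚ) ≤ ((m + 1) * (m + 2) * β : ℚ) / 2 + (β : ℚ) / 2)
    (hH : (layH l A : ℚ) ≤ ((m + 1) * (m + 2) * β : ℚ) / 2 + (β : ℚ) / 2) :
    ∃ S : Finset ℕ, S ⊆ Finset.Icc 1 m ∧ (∑ i ∈ S, (s i : ℚ)) = (β : ℚ) / 2 := by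
  classical
  rcases Nat.eq_zero_or_pos m with rfl | hm
  · have hb0 : β = 0 := by simp [hβ]
    exact ⟨∅, Finset.empty_subset _, by simp [hb0]⟩
  have hcl : LClass m s β l := aux_l_class m s β l hl1 hla hlb hl0
  have hsb : ∀ i, 1 ≤ i → i ≤ m → s i ≤ β := by
    intro i h1 h2
    rw [hβ]
    exact Finset.single_le_sum (fun j _ => Nat.zero_le (s j)) (Finset.mem_Icc.mpr ⟨h1, h2⟩)
  have hβ1 : 1 ≤ β := by
    have h1 := hs 1 le_rfl hm
    have h2 := hsb 1 le_rfl hm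
    omega
  have hpos : 0 < p * q := lt_of_lt_of_le (by positivity) hpq
  have hp : 0 < p := by
    rcases Nat.eq_zero_or_pos p with rfl | h
    · simp at hpos
    · exact h
  have hq : 0 < q := by
    rcases Nat.eq_zero_or_pos q with rfl | h
    · simp at hpos
    · exact h
  have hA1 : ∀ (i : Fin p) (j : Fin q), 1 ≤ A i j ∧ A i j ≤ p * q := by
    intro i j
    have : A i j ∈ Set.Icc 1 (p * q) := by
      rw [← hA.2]; exact ⟨(i, j), rfl⟩
    exact this
  have hbd : ∀ (i : Fin p) (j : Fin q), l (A i j) ≤ (m + 1) * β :=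
    fun i j => aux_l_le_max hcl hsb _ (hA1 i j).1
  obtain ⟨c, hc⟩ : ∃ c : ℕ → ℕ, c = fun t =>
      (Finset.univ.filter (fun j : Fin q => t ≤ Finset.univ.sup fun i : Fin p => l (A i j))).card :=
    ⟨_, rfl⟩
  obtain ⟨r, hr⟩ : ∃ r : ℕ → ℕ, r = fun t =>
      (Finset.univ.filter (fun i : Fin p => t ≤ Finset.univ.sup fun j : Fin q => l (A i j))).card :=
    ⟨_, rfl⟩
  have hWc : layW l A = ∑ t ∈ Finset.Ioc 0 ((m + 1) * β), c t := by
    rw [hc]; exact aux_layW l A ((m + 1) * β) hbd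
  have hHr : layH l A = ∑ t ∈ Finset.Ioc 0 ((m + 1) * β), r t := by
    rw [hr]; exact aux_layW l (fun (x : Fin q) (y : Fin p) => A y x) ((m + 1) * β) (fun i j => hbd j i)
  have hcount : ∀ t, ((Finset.Icc 1 ((m + 1) ^ 2)).filter (fun k => t ≤ l k)).card ≤ c t * r t := by
    intro t
    rw [hc, hr]
    exact aux_count hp hq A hA hpq l t
  -- per-threshold products
  have hcrA : ∀ t ∈ Finset.Ioc 0 β, (m + 1) * (m + 1) ≤ c t * r t := by
    intro t ht
    rw [Finset.mem_Ioc] at ht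
    have h1 := hcount t
    rw [aux_Na hcl hsb hm t ht.1 ht.2] at h1
    simpa [Nat.card_Icc, pow_two] using h1
  have hcrB : ∀ i, i < m → ∀ t ∈ Finset.Ioc ((m - i) * β) ((m - i) * β + s (i + 1)),
      (i + 1) * (i + 1) + (i + 1) ≤ c t * r t := by
    intro i hi t ht
    rw [Finset.mem_Ioc] at ht
    have h1 := hcount t
    have e1 : m + 1 - (i + 1) = m - i := by omega
    rw [aux_Nb hcl hsb (i + 1) (by omega) (by omega) t (by rw [e1]; exact ht.1) (by rw [e1]; exact ht.2)] at h1
    simpa [Nat.card_Icc] using h1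
  have hcrC : ∀ i, i < m → ∀ t ∈ Finset.Ioc ((m - i) * β + s (i + 1)) ((m + 1 - i) * β),
      (i + 1) * (i + 1) ≤ c t * r t := by
    intro i hi t ht
    rw [Finset.mem_Ioc] at ht
    have h1 := hcount t
    have e1 : m + 1 - (i + 1) = m - i := by omega
    have e2 : m + 2 - (i + 1) = m + 1 - i := by omega
    rw [aux_Nc hcl hsb (i + 1) (by omega) (by omega) t (by rw [e1]; exact ht.1) (by rw [e2]; exact ht.2)] at h1
    simpa [Nat.card_Icc] using h1
  -- constancy of c and r on the B-intervals
  have hA1' : ∀ (j : Fin q) (i : Fin p), 1 ≤ A i j := fun j i => (hA1 i j).1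
  have hconst : ∀ i, i < m → ∀ t ∈ Finset.Ioc ((m - i) * β) ((m - i) * β + s (i + 1)),
      c t = c ((m - i) * β + s (i + 1)) ∧ r t = r ((m - i) * β + s (i + 1)) := by
    intro i hi t ht
    rw [Finset.mem_Ioc] at ht
    have e1 : m + 1 - (i + 1) = m - i := by omega
    have hgap : ∀ (x : ℕ), 1 ≤ x → (m - i) * β < l x → (m - i) * β + s (i + 1) ≤ l x := by
      intro x hx h
      have := aux_gap hcl hsb (i + 1) (by omega) (by omega) x hx (by rw [e1]; exact h)
      rw [e1] at this
      exact this
    have h0t : (0 : ℕ) < t := by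
      have : 0 < s (i + 1) := hs (i + 1) (by omega) (by omega)
      omega
    have h0t' : (0 : ℕ) < (m - i) * β + s (i + 1) := by
      have : 0 < s (i + 1) := hs (i + 1) (by omega) (by omega)
      omega
    constructor
    · rw [hc]
      refine congrArg Finset.card (Finset.filter_congr ?_)
      intro j _
      constructor
      · intro h
        rw [Finset.le_sup_iff h0t] at h
        obtain ⟨i', -, hle⟩ := h
        rw [Finset.le_sup_iff h0t']
        exact ⟨i', Finset.mem_univ _, hgap (A i' j) (hA1 i' j).1 (lt_of_lt_of_le ht.1 hle)⟩
      · intro h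
        exact le_trans ht.2 h
    · rw [hr]
      refine congrArg Finset.card (Finset.filter_congr ?_)
      intro i' _
      constructor
      · intro h
        rw [Finset.le_sup_iff h0t] at h
        obtain ⟨j, -, hle⟩ := h
        rw [Finset.le_sup_iff h0t']
        exact ⟨j, Finset.mem_univ _, hgap (A i' j) (hA1 i' j).1 (lt_of_lt_of_le ht.1 hle)⟩
      · intro h
        exact le_trans ht.2 h
  -- decomposition of threshold sums
  have hdecomp : ∀ F : ℕ → ℕ, ∑ t ∈ Finset.Ioc 0 ((m + 1) * β), F t =
      ∑ t ∈ Finset.Ioc 0 β, F t +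
      ∑ i ∈ Finset.range m, (∑ t ∈ Finset.Ioc ((m - i) * β) ((m - i) * β + s (i + 1)), F t +
        ∑ t ∈ Finset.Ioc ((m - i) * β + s (i + 1)) ((m + 1 - i) * β), F t) := by
    intro F
    have h0 := aux_telescope F (fun i => (m + 1 - i) * β)
      (fun i => Nat.mul_le_mul_right β (by omega)) m
    rw [show m + 1 - 0 = m + 1 from rfl, show m + 1 - m = 1 from by omega, one_mul] at h0
    simp only [show ∀ j : ℕ, m + 1 - (j + 1) = m - j from fun j => by omega] at h0
    rw [h0]
    congr 1
    refine Finset.sum_congr rfl fun i hi => ?_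
    have hi' : i < m := Finset.mem_range.mp hi
    refine (Finset.sum_Ioc_consecutive F (Nat.le_add_right _ _) ?_).symm
    have h1 : s (i + 1) ≤ β := hsb (i + 1) (by omega) (by omega)
    have h2 : (m + 1 - i) * β = (m - i) * β + β := by
      rw [show m + 1 - i = m - i + 1 from by omega, Nat.succ_mul]
    omega
  -- lower bounds per threshold
  have hfa : ∀ t ∈ Finset.Ioc 0 β, 2 * (m + 1) ≤ c t + r t :=
    fun t ht => aux_key0 (c t) (r t) (m + 1) (hcrA t ht)
  have hfb : ∀ i, i < m → ∀ t ∈ Finset.Ioc ((m - i) * β) ((m - i) * β + s (i + 1)),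
      2 * (i + 1) + 1 ≤ c t + r t :=
    fun i hi t ht => aux_key2 (c t) (r t) (i + 1) (by omega) (hcrB i hi t ht)
  have hfc : ∀ i, i < m → ∀ t ∈ Finset.Ioc ((m - i) * β + s (i + 1)) ((m + 1 - i) * β),
      2 * (i + 1) ≤ c t + r t :=
    fun i hi t ht => aux_key0 (c t) (r t) (i + 1) (hcrC i hi t ht)
  -- piece sums and their lower bounds
  have hcard1 : ∀ i, (Finset.Ioc ((m - i) * β) ((m - i) * β + s (i + 1))).card = s (i + 1) := by
    intro i
    rw [Nat.card_Ioc]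
    omega
  have hcard2 : ∀ i, i < m →
      (Finset.Ioc ((m - i) * β + s (i + 1)) ((m + 1 - i) * β)).card = β - s (i + 1) := by
    intro i hi
    rw [Nat.card_Ioc]
    have h2 : (m + 1 - i) * β = (m - i) * β + β := by
      rw [show m + 1 - i = m - i + 1 from by omega, Nat.succ_mul]
    omega
  have hP0 : β * (2 * (m + 1)) ≤ ∑ t ∈ Finset.Ioc 0 β, (c t + r t) := by
    have h0 := Finset.card_nsmul_le_sum (Finset.Ioc 0 β) (fun t => c t + r t) (2 * (m + 1)) hfa
    rw [Nat.card_Ioc, Nat.sub_zero, smul_eq_mul] at h0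
    exact h0
  have hP1 : ∀ i, i < m → s (i + 1) * (2 * (i + 1) + 1) ≤
      ∑ t ∈ Finset.Ioc ((m - i) * β) ((m - i) * β + s (i + 1)), (c t + r t) := by
    intro i hi
    have := Finset.card_nsmul_le_sum (Finset.Ioc ((m - i) * β) ((m - i) * β + s (i + 1)))
      (fun t => c t + r t) (2 * (i + 1) + 1) (hfb i hi)
    rw [hcard1 i] at this
    simpa [smul_eq_mul] using this
  have hP2 : ∀ i, i < m → (β - s (i + 1)) * (2 * (i + 1)) ≤
      ∑ t ∈ Finset.Ioc ((m - i) * β + s (i + 1)) ((m + 1 - i) * β), (c t + r t) := by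
    intro i hi
    have := Finset.card_nsmul_le_sum (Finset.Ioc ((m - i) * β + s (i + 1)) ((m + 1 - i) * β))
      (fun t => c t + r t) (2 * (i + 1)) (hfc i hi)
    rw [hcard2 i hi] at this
    simpa [smul_eq_mul] using this
  -- total upper bound in ℕ
  have hWH : layW l A + layH l A ≤ (m + 1) * (m + 2) * β + β := by
    have h2 : ((layW l A + layH l A : ℕ) : ℚ) ≤ (((m + 1) * (m + 2) * β + β : ℕ) : ℚ) := by
      push_cast
      push_cast at hW hH
      linarith
    exact_mod_cast h2
  -- sum of pieces equals W + H
  have hsumWH : ∑ t ∈ Finset.Ioc 0 ((m + 1) * β), (c t + r t) = layW l A + layH l A := by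
    rw [hWc, hHr, Finset.sum_add_distrib]
  -- Gauss-type sums
  have hgauss : ∀ n : ℕ, ∑ i ∈ Finset.range n, (2 * (i + 1) * β + s (i + 1)) =
      n * (n + 1) * β + ∑ i ∈ Finset.range n, s (i + 1) := by
    intro n
    induction n with
    | zero => simp
    | succ n ih =>
      rw [Finset.sum_range_succ, ih, Finset.sum_range_succ]
      ring
  have hβ2 : ∑ i ∈ Finset.range m, s (i + 1) = β := by
    rw [hβ, show Finset.Icc 1 m = Finset.Ico 1 (m + 1) from rfl, Finset.sum_Ico_eq_sum_range]
    simp only [Nat.add_sub_cancel]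
    exact Finset.sum_congr rfl fun i _ => by rw [Nat.add_comm]
  -- per-level bound sums
  have hbound_eq : ∀ i, i < m → s (i + 1) * (2 * (i + 1) + 1) + (β - s (i + 1)) * (2 * (i + 1)) =
      2 * (i + 1) * β + s (i + 1) := by
    intro i hi
    have h1 : s (i + 1) ≤ β := hsb (i + 1) (by omega) (by omega)
    obtain ⟨d, hd⟩ : ∃ d, β = s (i + 1) + d := ⟨β - s (i + 1), by omega⟩
    rw [hd, Nat.add_sub_cancel_left]
    ring
  -- global equality forcing
  have hdf := hdecomp (fun t => c t + r t)
  have htotal_lb : ∑ i ∈ Finset.range m,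
      (∑ t ∈ Finset.Ioc ((m - i) * β) ((m - i) * β + s (i + 1)), (c t + r t) +
       ∑ t ∈ Finset.Ioc ((m - i) * β + s (i + 1)) ((m + 1 - i) * β), (c t + r t)) ≤
      ∑ i ∈ Finset.range m, (2 * (i + 1) * β + s (i + 1)) := by
    have hub : ∑ t ∈ Finset.Ioc 0 ((m + 1) * β), (c t + r t) ≤ (m + 1) * (m + 2) * β + β := by
      rw [hsumWH]; exact hWH
    rw [hdf] at hub
    have hg : m * (m + 1) * β + β + (β * (2 * (m + 1))) = (m + 1) * (m + 2) * β + β := by ring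
    rw [hgauss m, hβ2]
    omega
  have hpieces : ∀ i ∈ Finset.range m,
      (∑ t ∈ Finset.Ioc ((m - i) * β) ((m - i) * β + s (i + 1)), (c t + r t) +
       ∑ t ∈ Finset.Ioc ((m - i) * β + s (i + 1)) ((m + 1 - i) * β), (c t + r t)) =
      2 * (i + 1) * β + s (i + 1) := by
    refine aux_sum_eq_of_le _ _ _ ?_ htotal_lb
    intro i hi
    have hi' : i < m := Finset.mem_range.mp hi
    have := hP1 i hi'
    have := hP2 i hi'
    have := hbound_eq i hi'
    omega
  have hpiece1 : ∀ i, i < m →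
      ∑ t ∈ Finset.Ioc ((m - i) * β) ((m - i) * β + s (i + 1)), (c t + r t) =
      s (i + 1) * (2 * (i + 1) + 1) := by
    intro i hi
    have h1 := hpieces i (Finset.mem_range.mpr hi)
    have h2 := hP1 i hi
    have h3 := hP2 i hi
    have h4 := hbound_eq i hi
    omega
  have hpiece2 : ∀ i, i < m →
      ∑ t ∈ Finset.Ioc ((m - i) * β + s (i + 1)) ((m + 1 - i) * β), (c t + r t) =
      (β - s (i + 1)) * (2 * (i + 1)) := by
    intro i hi
    have h1 := hpieces i (Finset.mem_range.mpr hi)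
    have h2 := hP1 i hi
    have h3 := hP2 i hi
    have h4 := hbound_eq i hi
    omega
  have hpiece0 : ∑ t ∈ Finset.Ioc 0 β, (c t + r t) = β * (2 * (m + 1)) := by
    have hub : ∑ t ∈ Finset.Ioc 0 ((m + 1) * β), (c t + r t) ≤ (m + 1) * (m + 2) * β + β := by
      rw [hsumWH]; exact hWH
    rw [hdf] at hub
    have h5 : ∑ i ∈ Finset.range m,
      (∑ t ∈ Finset.Ioc ((m - i) * β) ((m - i) * β + s (i + 1)), (c t + r t) +
       ∑ t ∈ Finset.Ioc ((m - i) * β + s (i + 1)) ((m + 1 - i) * β), (c t + r t)) =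
      ∑ i ∈ Finset.range m, (2 * (i + 1) * β + s (i + 1)) :=
      Finset.sum_congr rfl hpieces
    rw [h5, hgauss m, hβ2] at hub
    have hg : m * (m + 1) * β + β + (β * (2 * (m + 1))) = (m + 1) * (m + 2) * β + β := by ring
    omega
  -- per-threshold equalities
  have hta : ∀ t ∈ Finset.Ioc 0 β, c t + r t = 2 * (m + 1) := by
    refine aux_sum_eq_of_le _ _ (fun _ => 2 * (m + 1)) hfa ?_
    rw [hpiece0, Finset.sum_const, Nat.card_Ioc, Nat.sub_zero, smul_eq_mul]
  have hca : ∀ t ∈ Finset.Ioc 0 β, c t = m + 1 :=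
    fun t ht => (aux_key1 (c t) (r t) (m + 1) (hcrA t ht) (hta t ht)).1
  have hra : ∀ t ∈ Finset.Ioc 0 β, r t = m + 1 :=
    fun t ht => (aux_key1 (c t) (r t) (m + 1) (hcrA t ht) (hta t ht)).2
  have htb : ∀ i, i < m → ∀ t ∈ Finset.Ioc ((m - i) * β) ((m - i) * β + s (i + 1)),
      c t + r t = 2 * (i + 1) + 1 := by
    intro i hi
    refine aux_sum_eq_of_le _ _ (fun _ => 2 * (i + 1) + 1) (hfb i hi) ?_
    rw [hpiece1 i hi, Finset.sum_const, hcard1 i, smul_eq_mul]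
  have htc : ∀ i, i < m → ∀ t ∈ Finset.Ioc ((m - i) * β + s (i + 1)) ((m + 1 - i) * β),
      c t + r t = 2 * (i + 1) := by
    intro i hi
    refine aux_sum_eq_of_le _ _ (fun _ => 2 * (i + 1)) (hfc i hi) ?_
    rw [hpiece2 i hi, Finset.sum_const, hcard2 i hi, smul_eq_mul]
  have hcc : ∀ i, i < m → ∀ t ∈ Finset.Ioc ((m - i) * β + s (i + 1)) ((m + 1 - i) * β),
      c t = i + 1 :=
    fun i hi t ht => (aux_key1 (c t) (r t) (i + 1) (hcrC i hi t ht) (htc i hi t ht)).1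
  have hrc : ∀ i, i < m → ∀ t ∈ Finset.Ioc ((m - i) * β + s (i + 1)) ((m + 1 - i) * β),
      r t = i + 1 :=
    fun i hi t ht => (aux_key1 (c t) (r t) (i + 1) (hcrC i hi t ht) (htc i hi t ht)).2
  -- the anchor point of each B-interval
  have ht0mem : ∀ i, i < m → (m - i) * β + s (i + 1) ∈
      Finset.Ioc ((m - i) * β) ((m - i) * β + s (i + 1)) := by
    intro i hi
    rw [Finset.mem_Ioc]
    have : 0 < s (i + 1) := hs (i + 1) (by omega) (by omega)
    omega
  have hkey3 : ∀ i, i < m → c ((m - i) * β + s (i + 1)) = i + 1 ∨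
      c ((m - i) * β + s (i + 1)) = i + 1 + 1 :=
    fun i hi => aux_key3 _ _ (i + 1) (hcrB i hi _ (ht0mem i hi)) (htb i hi _ (ht0mem i hi))
  -- sums of c and r over the pieces
  have hQ0 : ∑ t ∈ Finset.Ioc 0 β, c t = β * (m + 1) := by
    rw [Finset.sum_congr rfl hca, Finset.sum_const, Nat.card_Ioc, Nat.sub_zero, smul_eq_mul]
  have hR0 : ∑ t ∈ Finset.Ioc 0 β, r t = β * (m + 1) := by
    rw [Finset.sum_congr rfl hra, Finset.sum_const, Nat.card_Ioc, Nat.sub_zero, smul_eq_mul]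
  have hQ2 : ∀ i, i < m → ∑ t ∈ Finset.Ioc ((m - i) * β + s (i + 1)) ((m + 1 - i) * β), c t =
      (β - s (i + 1)) * (i + 1) := by
    intro i hi
    rw [Finset.sum_congr rfl (hcc i hi), Finset.sum_const, hcard2 i hi, smul_eq_mul]
  have hR2 : ∀ i, i < m → ∑ t ∈ Finset.Ioc ((m - i) * β + s (i + 1)) ((m + 1 - i) * β), r t =
      (β - s (i + 1)) * (i + 1) := by
    intro i hi
    rw [Finset.sum_congr rfl (hrc i hi), Finset.sum_const, hcard2 i hi, smul_eq_mul]
  have hQ1 : ∀ i, i < m → ∑ t ∈ Finset.Ioc ((m - i) * β) ((m - i) * β + s (i + 1)), c t =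
      s (i + 1) * c ((m - i) * β + s (i + 1)) := by
    intro i hi
    rw [Finset.sum_congr rfl (fun t ht => (hconst i hi t ht).1), Finset.sum_const, hcard1 i,
      smul_eq_mul]
  have hR1 : ∀ i, i < m → ∑ t ∈ Finset.Ioc ((m - i) * β) ((m - i) * β + s (i + 1)), r t =
      s (i + 1) * r ((m - i) * β + s (i + 1)) := by
    intro i hi
    rw [Finset.sum_congr rfl (fun t ht => (hconst i hi t ht).2), Finset.sum_const, hcard1 i,
      smul_eq_mul]
  -- the subset
  obtain ⟨S0, hS0⟩ : ∃ S0 : Finset ℕ, S0 = (Finset.range m).filter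
      (fun i => c ((m - i) * β + s (i + 1)) = i + 1 + 1) := ⟨_, rfl⟩
  have hgauss0 : ∀ n : ℕ, ∑ i ∈ Finset.range n, 2 * (i + 1) * β = n * (n + 1) * β := by
    intro n
    induction n with
    | zero => simp
    | succ n ih =>
      rw [Finset.sum_range_succ, ih]
      ring
  -- value of 2W
  have hWlevel : ∀ i ∈ Finset.range m,
      2 * (∑ t ∈ Finset.Ioc ((m - i) * β) ((m - i) * β + s (i + 1)), c t +
        ∑ t ∈ Finset.Ioc ((m - i) * β + s (i + 1)) ((m + 1 - i) * β), c t) =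
      2 * (i + 1) * β + 2 * (if i ∈ S0 then s (i + 1) else 0) := by
    intro i hi
    have hi' : i < m := Finset.mem_range.mp hi
    rw [hQ1 i hi', hQ2 i hi']
    have h1 : s (i + 1) ≤ β := hsb (i + 1) (by omega) (by omega)
    obtain ⟨d, hd⟩ : ∃ d, β = s (i + 1) + d := ⟨β - s (i + 1), by omega⟩
    by_cases hmem : i ∈ S0
    · have hceq : c ((m - i) * β + s (i + 1)) = i + 1 + 1 := by
        have h5 := hmem
        rw [hS0] at h5
        exact (Finset.mem_filter.mp h5).2
      rw [hceq, if_pos hmem, hd, Nat.add_sub_cancel_left]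
      ring
    · have hceq : c ((m - i) * β + s (i + 1)) = i + 1 := by
        rcases hkey3 i hi' with h | h
        · exact h
        · exact absurd (by rw [hS0]; exact Finset.mem_filter.mpr ⟨hi, h⟩) hmem
      rw [hceq, if_neg hmem, hd, Nat.add_sub_cancel_left]
      ring
  have hHlevel : ∀ i ∈ Finset.range m,
      2 * (∑ t ∈ Finset.Ioc ((m - i) * β) ((m - i) * β + s (i + 1)), r t +
        ∑ t ∈ Finset.Ioc ((m - i) * β + s (i + 1)) ((m + 1 - i) * β), r t) =
      2 * (i + 1) * β + 2 * (if i ∈ S0 then 0 else s (i + 1)) := by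
    intro i hi
    have hi' : i < m := Finset.mem_range.mp hi
    rw [hR1 i hi', hR2 i hi']
    have h1 : s (i + 1) ≤ β := hsb (i + 1) (by omega) (by omega)
    obtain ⟨d, hd⟩ : ∃ d, β = s (i + 1) + d := ⟨β - s (i + 1), by omega⟩
    have hsum := htb i hi' _ (ht0mem i hi')
    by_cases hmem : i ∈ S0
    · have hceq : c ((m - i) * β + s (i + 1)) = i + 1 + 1 := by
        have h5 := hmem
        rw [hS0] at h5
        exact (Finset.mem_filter.mp h5).2
      have hreq : r ((m - i) * β + s (i + 1)) = i + 1 := by omega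
      rw [hreq, if_pos hmem, hd, Nat.add_sub_cancel_left]
      ring
    · have hceq : c ((m - i) * β + s (i + 1)) = i + 1 := by
        rcases hkey3 i hi' with h | h
        · exact h
        · exact absurd (by rw [hS0]; exact Finset.mem_filter.mpr ⟨hi, h⟩) hmem
      have hreq : r ((m - i) * β + s (i + 1)) = i + 1 + 1 := by omega
      rw [hreq, if_neg hmem, hd, Nat.add_sub_cancel_left]
      ring
  have hWval : 2 * layW l A = 2 * (β * (m + 1)) + m * (m + 1) * β +
      2 * ∑ i ∈ S0, s (i + 1) := by
    rw [hWc, hdecomp c, hQ0]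
    rw [Nat.mul_add, Finset.mul_sum, Finset.sum_congr rfl hWlevel, Finset.sum_add_distrib,
      hgauss0 m]
    have : ∑ i ∈ Finset.range m, 2 * (if i ∈ S0 then s (i + 1) else 0) =
        2 * ∑ i ∈ S0, s (i + 1) := by
      rw [← Finset.mul_sum]
      congr 1
      rw [hS0, Finset.sum_filter]
      refine Finset.sum_congr rfl fun i hi => ?_
      have h5 : (i ∈ (Finset.range m).filter
          (fun i => c ((m - i) * β + s (i + 1)) = i + 1 + 1)) ↔
          (c ((m - i) * β + s (i + 1)) = i + 1 + 1) := by
        simp [Finset.mem_filter, hi]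
      simp only [h5]
    omega
  have hHval : 2 * layH l A = 2 * (β * (m + 1)) + m * (m + 1) * β +
      2 * ∑ i ∈ (Finset.range m).filter (fun i => i ∉ S0), s (i + 1) := by
    rw [hHr, hdecomp r, hR0]
    rw [Nat.mul_add, Finset.mul_sum, Finset.sum_congr rfl hHlevel, Finset.sum_add_distrib,
      hgauss0 m]
    have : ∑ i ∈ Finset.range m, 2 * (if i ∈ S0 then 0 else s (i + 1)) =
        2 * ∑ i ∈ (Finset.range m).filter (fun i => i ∉ S0), s (i + 1) := by
      rw [← Finset.mul_sum]
      congr 1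
      rw [Finset.sum_filter]
      exact Finset.sum_congr rfl fun i _ => by by_cases h : i ∈ S0 <;> simp [h]
    omega
  -- the split of β
  have hnotS : (Finset.range m).filter (fun i => i ∉ S0) =
      (Finset.range m).filter (fun i => ¬ (c ((m - i) * β + s (i + 1)) = i + 1 + 1)) := by
    apply Finset.filter_congr
    intro i hi
    rw [hS0]
    simp [Finset.mem_filter, hi]
  have hST : ∑ i ∈ S0, s (i + 1) +
      ∑ i ∈ (Finset.range m).filter (fun i => i ∉ S0), s (i + 1) = β := by
    rw [hnotS, hS0, ← hβ2]
    exact Finset.sum_filter_add_sum_filter_not (Finset.range m) _ _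
  -- upper bounds on 2W and 2H
  have h2W : 2 * layW l A ≤ (m + 1) * (m + 2) * β + β := by
    have h2 : ((2 * layW l A : ℕ) : ℚ) ≤ (((m + 1) * (m + 2) * β + β : ℕ) : ℚ) := by
      push_cast
      linarith
    exact_mod_cast h2
  have h2H : 2 * layH l A ≤ (m + 1) * (m + 2) * β + β := by
    have h2 : ((2 * layH l A : ℕ) : ℚ) ≤ (((m + 1) * (m + 2) * β + β : ℕ) : ℚ) := by
      push_cast
      linarith
    exact_mod_cast h2
  have hident : 2 * (β * (m + 1)) + m * (m + 1) * β = (m + 1) * (m + 2) * β := by ring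
  have hfinal : 2 * ∑ i ∈ S0, s (i + 1) = β := by omega
  -- conclusion
  refine ⟨S0.image (· + 1), ?_, ?_⟩
  · intro x hx
    obtain ⟨i, hi, rfl⟩ := Finset.mem_image.mp hx
    rw [hS0] at hi
    have : i ∈ Finset.range m := Finset.mem_of_mem_filter i hi
    rw [Finset.mem_range] at this
    rw [Finset.mem_Icc]
    omega
  · rw [Finset.sum_image (fun a _ b _ h => by omega)]
    have hcast : (∑ i ∈ S0, (s (i + 1) : ℚ)) = ((∑ i ∈ S0, s (i + 1) : ℕ) : ℚ) := by
      push_cast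
      rfl
    rw [hcast]
    have h := hfinal
    have h2 : ((2 * ∑ i ∈ S0, s (i + 1) : ℕ) : ℚ) = (β : ℚ) :=
      congrArg (Nat.cast : ℕ → ℚ) h
    push_cast at h2
    linarith
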